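/- Let a > 0 and λ > a²/(2(a+1)). Then t₃* = √(2λ(a+1)) − a/2 > 0, and g(t₃*) = t₃* − a/2, i.e., t₃* is a root of the equation x − g(x) − a/2 = 0, where g(x) = (2/3)(a+x)cos(φ(x)/3) − 2a/3 + x/3 with φ(x) = arccos(1 − 27λa(a+1)/(2(a+x)³)). -/

import Mathlib

/-- For `a > 0` and `λ > a²/(2(a+1))`, `t₃* = √(2λ(a+1)) − a/2 > 0` and
`g(t₃*) = t₃* − a/2`, i.e. `t₃*` solves `x − g(x) − a/2 = 0`. -/
theorem t3_root_of_w (a lam : ℝ) (ha : 0 < a) (hlam : a ^ 2 / (2 * (a + 1)) < lam) :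
    let t₃ := Real.sqrt (2 * lam * (a + 1)) - a / 2
    let g : ℝ → ℝ := fun x =>
      (2 / 3) * (a + x) *
          Real.cos (Real.arccos (1 - 27 * lam * a * (a + 1) / (2 * (a + x) ^ 3)) / 3) -
        2 * a / 3 + x / 3
    0 < t₃ ∧ g t₃ = t₃ - a / 2 := by
  intro t₃ g
  have ha1 : (0:ℝ) < 2 * (a + 1) := by linarith
  have hsqlt : a ^ 2 < 2 * lam * (a + 1) := by
    have := (div_lt_iff₀ ha1).mp hlam
    nlinarith
  have hnn : (0:ℝ) ≤ 2 * lam * (a + 1) := by nlinarith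
  set s := Real.sqrt (2 * lam * (a + 1)) with hs
  have hsq : s ^ 2 = 2 * lam * (a + 1) := Real.sq_sqrt hnn
  have has : a < s := by
    rw [hs]
    exact (Real.lt_sqrt ha.le).mpr hsqlt
  have ht₃ : t₃ = s - a / 2 := rfl
  have hpos : 0 < t₃ := by rw [ht₃]; linarith
  refine ⟨hpos, ?_⟩
  have hden : (0:ℝ) < s + a / 2 := by linarith
  set c : ℝ := (s - a / 4) / (s + a / 2) with hc
  have hc_half : (1:ℝ)/2 < c := by
    rw [hc, lt_div_iff₀ hden]; linarith
  have hc_lt_one : c < 1 := by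
    rw [hc, div_lt_one hden]; linarith
  have hc_mem1 : (-1:ℝ) ≤ c := by linarith
  have hc_mem2 : c ≤ 1 := hc_lt_one.le
  -- the argument of arccos equals cos (3 * arccos c)
  have hlam_eq : lam * (a + 1) = s ^ 2 / 2 := by rw [hsq]; ring
  have harg : 1 - 27 * lam * a * (a + 1) / (2 * (a + t₃) ^ 3)
      = Real.cos (3 * Real.arccos c) := by
    rw [Real.cos_three_mul, Real.cos_arccos hc_mem1 hc_mem2]
    have hat : a + t₃ = s + a / 2 := by rw [ht₃]; ring
    rw [hat, hc]
    have h27 : 27 * lam * a * (a + 1) = 27 * a * s ^ 2 / 2 := by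
      have : 27 * lam * a * (a + 1) = 27 * a * (lam * (a + 1)) := by ring
      rw [this, hlam_eq]; ring
    rw [h27]
    have hne : s * 2 + a ≠ 0 := (show (0:ℝ) < s * 2 + a by linarith).ne'
    have hne' : s + a / 2 ≠ 0 := hden.ne'
    field_simp
    ring
  have harc_le : Real.arccos c ≤ Real.pi / 3 := by
    have h13 : Real.arccos (1/2 : ℝ) = Real.pi / 3 := by
      rw [show (1/2 : ℝ) = Real.cos (Real.pi / 3) from (Real.cos_pi_div_three).symm]
      exact Real.arccos_cos (by positivity) (by linarith [Real.pi_pos])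
    calc Real.arccos c ≤ Real.arccos (1/2) := by
          rw [Real.arccos_eq_pi_div_two_sub_arcsin, Real.arccos_eq_pi_div_two_sub_arcsin]
          have := Real.monotone_arcsin hc_half.le
          linarith
      _ = Real.pi / 3 := h13
  have harccos : Real.arccos (1 - 27 * lam * a * (a + 1) / (2 * (a + t₃) ^ 3))
      = 3 * Real.arccos c := by
    rw [harg]
    exact Real.arccos_cos (by have := Real.arccos_nonneg c; linarith)
      (by linarith [harc_le])
  simp only [g]
  rw [harccos]
  have : (3 : ℝ) * Real.arccos c / 3 = Real.arccos c := by ring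
  rw [this, Real.cos_arccos hc_mem1 hc_mem2, ht₃]
  have hat : a + (s - a / 2) = s + a / 2 := by ring
  rw [hat, hc]
  have hne : s * 2 + a ≠ 0 := (show (0:ℝ) < s * 2 + a by linarith).ne'
  have hne' : s + a / 2 ≠ 0 := hden.ne'
  field_simp
  ring_nf
  field_simp
  ring
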